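/- For every λ ∈ ℝ, let μ_λ be the Lie bracket on ℝ^7 with nonzero basis brackets [e1,e2]=e3, [e1,e3]=e4, [e1,e4]=e5, [e1,e5]=e6, [e1,e6]=e7, [e2,e3]=e5, [e2,e4]=e6, [e2,e5]=λe7, [e3,e4]=(1-λ)e7. Then μ_λ satisfies the Jacobi identity, φ = (1/5)·diag(1,2,3,4,5,6,7) is a derivation of (ℝ^7,μ_λ), and φ is pre-Einstein, i.e. trace(φ∘ψ) = trace(ψ) for every derivation ψ of (ℝ^7,μ_λ). -/

import Mathlib

open Finset

noncomputable section

/-- `ℝ⁷` with its standard basis and standard inner product. -/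
abbrev V7 : Type := Fin 7 → ℝ

/-- The standard basis vector `e i`. -/
def e (i : Fin 7) : V7 := Pi.single i 1

/-- The standard inner product on `ℝ⁷`. -/
def dot (x y : V7) : ℝ := ∑ i, x i * y i

/-- Structure constants built from a list of entries `(i, j, k, a)`, each meaning that
`μ (e i) (e j)` has component `a` along `e k` (and `μ (e j) (e i)` has component `-a`);
all unlisted basis brackets are `0`. -/
def toC (L : List (Fin 7 × Fin 7 × Fin 7 × ℝ)) (i j k : Fin 7) : ℝ :=
  (L.map fun t =>
      (if t.1 = i ∧ t.2.1 = j ∧ t.2.2.1 = k then t.2.2.2 else 0)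
    - (if t.1 = j ∧ t.2.1 = i ∧ t.2.2.1 = k then t.2.2.2 else 0)).sum

/-- The bilinear skew-symmetric map on `ℝ⁷` with structure constants `c`. -/
def br (c : Fin 7 → Fin 7 → Fin 7 → ℝ) (x y : V7) : V7 :=
  fun k => ∑ i, ∑ j, x i * y j * c i j k

lemma br_add_left (c : Fin 7 → Fin 7 → Fin 7 → ℝ) (x x' y : V7) :
    br c (x + x') y = br c x y + br c x' y := by
  funext k
  simp only [br, Pi.add_apply, ← Finset.sum_add_distrib]
  exact Finset.sum_congr rfl fun i _ => Finset.sum_congr rfl fun j _ => by ring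

lemma br_smul_left (c : Fin 7 → Fin 7 → Fin 7 → ℝ) (r : ℝ) (x y : V7) :
    br c (r • x) y = r • br c x y := by
  funext k
  simp only [br, Pi.smul_apply, smul_eq_mul, Finset.mul_sum]
  exact Finset.sum_congr rfl fun i _ => Finset.sum_congr rfl fun j _ => by ring

lemma br_add_right (c : Fin 7 → Fin 7 → Fin 7 → ℝ) (x y y' : V7) :
    br c x (y + y') = br c x y + br c x y' := by
  funext k
  simp only [br, Pi.add_apply, ← Finset.sum_add_distrib]
  exact Finset.sum_congr rfl fun i _ => Finset.sum_congr rfl fun j _ => by ring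

lemma br_smul_right (c : Fin 7 → Fin 7 → Fin 7 → ℝ) (r : ℝ) (x y : V7) :
    br c x (r • y) = r • br c x y := by
  funext k
  simp only [br, Pi.smul_apply, smul_eq_mul, Finset.mul_sum]
  exact Finset.sum_congr rfl fun i _ => Finset.sum_congr rfl fun j _ => by ring

lemma br_zero_left (c : Fin 7 → Fin 7 → Fin 7 → ℝ) (y : V7) : br c 0 y = 0 := by
  funext k; simp [br]

lemma br_zero_right (c : Fin 7 → Fin 7 → Fin 7 → ℝ) (x : V7) : br c x 0 = 0 := by
  funext k; simp [br]

/-- The space of derivations of the algebra `(ℝ⁷, br c)`, i.e. the linear maps `D` with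
`D (μ x y) = μ (D x) y + μ x (D y)` for all `x, y`, as a submodule of the endomorphisms. -/
def derivations (c : Fin 7 → Fin 7 → Fin 7 → ℝ) : Submodule ℝ (Module.End ℝ V7) where
  carrier := {D | ∀ x y, D (br c x y) = br c (D x) y + br c x (D y)}
  add_mem' := by
    intro D E hD hE x y
    simp only [LinearMap.add_apply, hD x y, hE x y, br_add_left, br_add_right]
    abel
  zero_mem' := by
    intro x y
    simp [br_zero_left, br_zero_right]
  smul_mem' := by
    intro r D hD x y
    simp only [LinearMap.smul_apply, hD x y, smul_add, br_smul_left, br_smul_right]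

/-- The Jacobi identity for the bracket `br c`. -/
def Jacobi (c : Fin 7 → Fin 7 → Fin 7 → ℝ) : Prop :=
  ∀ x y z : V7, br c (br c x y) z + br c (br c y z) x + br c (br c z x) y = 0

/-- Skew-symmetry of the bracket `br c`. -/
def Skew (c : Fin 7 → Fin 7 → Fin 7 → ℝ) : Prop :=
  ∀ x y : V7, br c x y = - br c y x

/-- The diagonal endomorphism `diag (a 1, …, a 7)` of `ℝ⁷`, `e i ↦ a i • e i`. -/
def diagL (a : Fin 7 → ℝ) : Module.End ℝ V7 :=
  LinearMap.pi fun i => a i • LinearMap.proj i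

/-- Structure constants of the bracket `μ_λ` with nonzero basis brackets
`[e1,e2]=e3, [e1,e3]=e4, [e1,e4]=e5, [e1,e5]=e6, [e1,e6]=e7, [e2,e3]=e5, [e2,e4]=e6,
[e2,e5]=λe7, [e3,e4]=(1-λ)e7`. -/
def c6 (lam : ℝ) : Fin 7 → Fin 7 → Fin 7 → ℝ :=
  toC [(0, 1, 2, (1:ℝ)),
   (0, 2, 3, 1),
   (0, 3, 4, 1),
   (0, 4, 5, 1),
   (0, 5, 6, 1),
   (1, 2, 4, 1),
   (1, 3, 5, 1),
   (1, 4, 6, lam),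
   (2, 3, 6, 1 - lam)]

/-! ### Auxiliary material -/

/-- Integer structure constants from a list. -/
def toCZ (L : List (Fin 7 × Fin 7 × Fin 7 × ℤ)) (i j k : Fin 7) : ℤ :=
  (L.map fun t =>
      (if t.1 = i ∧ t.2.1 = j ∧ t.2.2.1 = k then t.2.2.2 else 0)
    - (if t.1 = j ∧ t.2.1 = i ∧ t.2.2.1 = k then t.2.2.2 else 0)).sum

/-- Constant (λ-free) part of the structure constants. -/
def fz : Fin 7 → Fin 7 → Fin 7 → ℤ :=
  toCZ [(0,1,2,1),(0,2,3,1),(0,3,4,1),(0,4,5,1),(0,5,6,1),(1,2,4,1),(1,3,5,1),(2,3,6,1)]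

/-- λ-coefficient part of the structure constants. -/
def gz : Fin 7 → Fin 7 → Fin 7 → ℤ := toCZ [(1,4,6,1),(2,3,6,-1)]

lemma hc (lam : ℝ) (i j k : Fin 7) :
    c6 lam i j k = (fz i j k : ℝ) + lam * (gz i j k : ℝ) := by
  have h1 : ∀ (P : Prop) [Decidable P], (if P then lam else (0:ℝ)) = lam * (if P then 1 else 0) := by
    intro P _; split <;> ring
  have h2 : ∀ (P : Prop) [Decidable P],
      (if P then 1 - lam else (0:ℝ)) = (if P then 1 else 0) - lam * (if P then 1 else 0) := by
    intro P _; split <;> ring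
  have h3 : ∀ (P : Prop) [Decidable P], (if P then (-1:ℝ) else 0) = -(if P then 1 else 0) := by
    intro P _; split <;> norm_num
  simp only [c6, fz, gz, toC, toCZ, List.map_cons, List.map_nil, List.sum_cons, List.sum_nil]
  push_cast
  simp only [h1, h2, h3]
  ring

lemma toC_anti (L : List (Fin 7 × Fin 7 × Fin 7 × ℝ)) (i j k : Fin 7) :
    toC L j i k = - toC L i j k := by
  induction L with
  | nil => simp [toC]
  | cons t L ih =>
      simp only [toC, List.map_cons, List.sum_cons] at ih ⊢
      linarith [ih]

lemma c6_anti (lam : ℝ) (i j k : Fin 7) : c6 lam i j k = - c6 lam j i k := toC_anti _ j i k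

lemma mem_derivations {c : Fin 7 → Fin 7 → Fin 7 → ℝ} {D : Module.End ℝ V7} :
    D ∈ derivations c ↔ ∀ x y, D (br c x y) = br c (D x) y + br c x (D y) := Iff.rfl

lemma br_apply (c : Fin 7 → Fin 7 → Fin 7 → ℝ) (x y : V7) (k : Fin 7) :
    br c x y k = ∑ i, ∑ j, x i * y j * c i j k := rfl

lemma br_right_e (c : Fin 7 → Fin 7 → Fin 7 → ℝ) (v : V7) (j k : Fin 7) :
    br c v (e j) k = ∑ s, v s * c s j k := by
  rw [br_apply]
  refine Finset.sum_congr rfl fun s _ => ?_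
  have : ∀ t, v s * e j t * c s t k = if t = j then v s * c s t k else 0 := by
    intro t
    simp only [e, Pi.single_apply]
    split <;> simp
  simp only [this]
  rw [Fintype.sum_ite_eq' j (fun t => v s * c s t k)]

lemma br_left_e (c : Fin 7 → Fin 7 → Fin 7 → ℝ) (v : V7) (i k : Fin 7) :
    br c (e i) v k = ∑ t, v t * c i t k := by
  rw [br_apply]
  have : ∀ s, (∑ j, e i s * v j * c s j k) = if s = i then (∑ j, v j * c s j k) else 0 := by
    intro s
    simp only [e, Pi.single_apply]
    split <;> [simp [one_mul]; simp]
  simp only [this]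
  rw [Fintype.sum_ite_eq' i (fun s => ∑ j, v j * c s j k)]

lemma br_e_e (c : Fin 7 → Fin 7 → Fin 7 → ℝ) (i j k : Fin 7) :
    br c (e i) (e j) k = c i j k := by
  rw [br_right_e]
  have : ∀ s, e i s * c s j k = if s = i then c s j k else 0 := by
    intro s
    simp only [e, Pi.single_apply]
    split <;> simp
  simp only [this]
  rw [Fintype.sum_ite_eq' i (fun s => c s j k)]

/-! Sum-shuffling lemmas. -/

lemma sum3_cycle (G : Fin 7 → Fin 7 → Fin 7 → ℝ) :
    ∑ a, ∑ b, ∑ c, G a b c = ∑ c, ∑ a, ∑ b, G a b c := by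
  calc ∑ a, ∑ b, ∑ c, G a b c = ∑ a, ∑ c, ∑ b, G a b c :=
        Finset.sum_congr rfl fun _ _ => Finset.sum_comm
    _ = ∑ c, ∑ a, ∑ b, G a b c := Finset.sum_comm

lemma sum4_perm (F : Fin 7 → Fin 7 → Fin 7 → Fin 7 → ℝ) :
    ∑ m, ∑ l, ∑ i, ∑ j, F i j l m = ∑ i, ∑ j, ∑ l, ∑ m, F i j l m := by
  calc ∑ m, ∑ l, ∑ i, ∑ j, F i j l m
      = ∑ l, ∑ m, ∑ i, ∑ j, F i j l m := Finset.sum_comm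
    _ = ∑ l, ∑ i, ∑ m, ∑ j, F i j l m :=
        Finset.sum_congr rfl fun _ _ => Finset.sum_comm
    _ = ∑ l, ∑ i, ∑ j, ∑ m, F i j l m :=
        Finset.sum_congr rfl fun _ _ => Finset.sum_congr rfl fun _ _ => Finset.sum_comm
    _ = ∑ i, ∑ l, ∑ j, ∑ m, F i j l m := Finset.sum_comm
    _ = ∑ i, ∑ j, ∑ l, ∑ m, F i j l m :=
        Finset.sum_congr rfl fun _ _ => Finset.sum_comm

lemma quad (c : Fin 7 → Fin 7 → Fin 7 → ℝ) (x y z : V7) (k : Fin 7) :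
    br c (br c x y) z k = ∑ i, ∑ j, ∑ l, x i * y j * z l * (∑ m, c i j m * c m l k) := by
  have h : ∀ m l, (br c x y) m * z l * c m l k
      = ∑ i, ∑ j, x i * y j * z l * (c i j m * c m l k) := by
    intro m l
    rw [br_apply, Finset.sum_mul, Finset.sum_mul]
    refine Finset.sum_congr rfl fun i _ => ?_
    rw [Finset.sum_mul, Finset.sum_mul]
    exact Finset.sum_congr rfl fun j _ => by ring
  calc br c (br c x y) z k
      = ∑ m, ∑ l, ∑ i, ∑ j, x i * y j * z l * (c i j m * c m l k) := by
        rw [br_apply]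
        exact Finset.sum_congr rfl fun m _ => Finset.sum_congr rfl fun l _ => h m l
    _ = ∑ i, ∑ j, ∑ l, ∑ m, x i * y j * z l * (c i j m * c m l k) :=
        sum4_perm (fun i j l m => x i * y j * z l * (c i j m * c m l k))
    _ = ∑ i, ∑ j, ∑ l, x i * y j * z l * (∑ m, c i j m * c m l k) := by
        refine Finset.sum_congr rfl fun i _ => Finset.sum_congr rfl fun j _ =>
          Finset.sum_congr rfl fun l _ => ?_
        rw [Finset.mul_sum]

set_option maxRecDepth 40000 in
lemma jac0 : ∀ i j l k : Fin 7,
    (∑ m, (fz i j m * fz m l k + fz j l m * fz m i k + fz l i m * fz m j k)) = 0 := by decide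

set_option maxRecDepth 40000 in
lemma jac1 : ∀ i j l k : Fin 7,
    (∑ m, (fz i j m * gz m l k + gz i j m * fz m l k
         + fz j l m * gz m i k + gz j l m * fz m i k
         + fz l i m * gz m j k + gz l i m * fz m j k)) = 0 := by decide

set_option maxRecDepth 40000 in
lemma jac2 : ∀ i j l k : Fin 7,
    (∑ m, (gz i j m * gz m l k + gz j l m * gz m i k + gz l i m * gz m j k)) = 0 := by decide

lemma coeff_zero (lam : ℝ) (i j l k : Fin 7) :
    (∑ m, (c6 lam i j m * c6 lam m l k + c6 lam j l m * c6 lam m i k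
         + c6 lam l i m * c6 lam m j k)) = 0 := by
  have h0 : ((∑ m, (fz i j m * fz m l k + fz j l m * fz m i k + fz l i m * fz m j k) : ℤ) : ℝ)
      = 0 := by rw [jac0]; norm_num
  have h1 : ((∑ m, (fz i j m * gz m l k + gz i j m * fz m l k
         + fz j l m * gz m i k + gz j l m * fz m i k
         + fz l i m * gz m j k + gz l i m * fz m j k) : ℤ) : ℝ) = 0 := by rw [jac1]; norm_num
  have h2 : ((∑ m, (gz i j m * gz m l k + gz j l m * gz m i k + gz l i m * gz m j k) : ℤ) : ℝ)
      = 0 := by rw [jac2]; norm_num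
  push_cast at h0 h1 h2
  calc (∑ m, (c6 lam i j m * c6 lam m l k + c6 lam j l m * c6 lam m i k
         + c6 lam l i m * c6 lam m j k))
      = ∑ m, (((fz i j m : ℝ) * fz m l k + fz j l m * fz m i k + fz l i m * fz m j k)
          + lam * ((fz i j m : ℝ) * gz m l k + gz i j m * fz m l k
               + fz j l m * gz m i k + gz j l m * fz m i k
               + fz l i m * gz m j k + gz l i m * fz m j k)
          + lam^2 * ((gz i j m : ℝ) * gz m l k + gz j l m * gz m i k + gz l i m * gz m j k)) := by
        refine Finset.sum_congr rfl fun m _ => ?_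
        rw [hc lam i j m, hc lam m l k, hc lam j l m, hc lam m i k, hc lam l i m, hc lam m j k]
        ring
    _ = 0 := by
        rw [Finset.sum_add_distrib, Finset.sum_add_distrib, ← Finset.mul_sum, ← Finset.mul_sum,
          h0, h1, h2]
        ring

/-! Gradedness facts for the derivation `φ`. -/

set_option maxRecDepth 40000 in
lemma gradf : ∀ i j k : Fin 7,
    ((k.val : ℤ) + 1) * fz i j k = (((i.val : ℤ) + 1) + ((j.val : ℤ) + 1)) * fz i j k := by decide

set_option maxRecDepth 40000 in
lemma gradg : ∀ i j k : Fin 7,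
    ((k.val : ℤ) + 1) * gz i j k = (((i.val : ℤ) + 1) + ((j.val : ℤ) + 1)) * gz i j k := by decide

lemma avec_eq : ∀ i : Fin 7, (![1, 2, 3, 4, 5, 6, 7] : Fin 7 → ℝ) i = (i.val : ℝ) + 1 := by
  intro i; fin_cases i <;> norm_num

lemma haval (lam : ℝ) (i j k : Fin 7) :
    (![1, 2, 3, 4, 5, 6, 7] : Fin 7 → ℝ) k * c6 lam i j k
      = ((![1, 2, 3, 4, 5, 6, 7] : Fin 7 → ℝ) i + (![1, 2, 3, 4, 5, 6, 7] : Fin 7 → ℝ) j)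
        * c6 lam i j k := by
  have h1 : ((k.val : ℝ) + 1) * (fz i j k : ℝ)
      = (((i.val : ℝ) + 1) + ((j.val : ℝ) + 1)) * (fz i j k : ℝ) := by
    exact_mod_cast gradf i j k
  have h2 : ((k.val : ℝ) + 1) * (gz i j k : ℝ)
      = (((i.val : ℝ) + 1) + ((j.val : ℝ) + 1)) * (gz i j k : ℝ) := by
    exact_mod_cast gradg i j k
  rw [avec_eq, avec_eq, avec_eq, hc]
  linear_combination h1 + lam * h2

lemma diagL_apply (a : Fin 7 → ℝ) (v : V7) (k : Fin 7) : diagL a v k = a k * v k := rfl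

lemma trace_eq (ψ : Module.End ℝ V7) : LinearMap.trace ℝ V7 ψ = ∑ i, ψ (e i) i := by
  rw [LinearMap.trace_eq_matrix_trace ℝ (Pi.basisFun ℝ (Fin 7)) ψ, Matrix.trace]
  refine Finset.sum_congr rfl fun i _ => ?_
  simp [Matrix.diag, LinearMap.toMatrix_apply, e]

/-- The key diagonal relation extracted from a bracket `[e i, e j] = e k`. -/
lemma key (c : Fin 7 → Fin 7 → Fin 7 → ℝ) {ψ : Module.End ℝ V7}
    (hd : ∀ x y, ψ (br c x y) = br c (ψ x) y + br c x (ψ y)) (i j k : Fin 7)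
    (h1 : ∀ p, c i j p = if p = k then 1 else 0)
    (h2 : ∀ s, c s j k = if s = i then 1 else 0)
    (h3 : ∀ t, c i t k = if t = j then 1 else 0) :
    ψ (e k) k = ψ (e i) i + ψ (e j) j := by
  have hb : br c (e i) (e j) = e k := by
    funext p
    rw [br_e_e, h1, e, Pi.single_apply]
  have hh := congrFun (hd (e i) (e j)) k
  rw [hb] at hh
  rw [hh, Pi.add_apply]
  have hA : br c (ψ (e i)) (e j) k = ψ (e i) i := by
    rw [br_right_e]
    have : ∀ s, ψ (e i) s * c s j k = if s = i then ψ (e i) s else 0 := by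
      intro s; rw [h2]; split <;> simp
    simp only [this]
    rw [Fintype.sum_ite_eq' i (fun s => ψ (e i) s)]
  have hB : br c (e i) (ψ (e j)) k = ψ (e j) j := by
    rw [br_left_e]
    have : ∀ t, ψ (e j) t * c i t k = if t = j then ψ (e j) t else 0 := by
      intro t; rw [h3]; split <;> simp
    simp only [this]
    rw [Fintype.sum_ite_eq' j (fun t => ψ (e j) t)]
  rw [hA, hB]

lemma c6_eval (lam : ℝ) {i j k : Fin 7}
    (hf : ∀ p, fz i j p = if p = k then 1 else 0) (hg : ∀ p, gz i j p = 0) :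
    ∀ p, c6 lam i j p = if p = k then 1 else 0 := by
  intro p
  rw [hc, hf, hg]
  by_cases h : p = k <;> simp [h]

lemma c6_eval2 (lam : ℝ) {i j k : Fin 7}
    (hf : ∀ s, fz s j k = if s = i then 1 else 0) (hg : ∀ s, gz s j k = 0) :
    ∀ s, c6 lam s j k = if s = i then 1 else 0 := by
  intro s
  rw [hc, hf, hg]
  by_cases h : s = i <;> simp [h]

lemma c6_eval3 (lam : ℝ) {i j k : Fin 7}
    (hf : ∀ t, fz i t k = if t = j then 1 else 0) (hg : ∀ t, gz i t k = 0) :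
    ∀ t, c6 lam i t k = if t = j then 1 else 0 := by
  intro t
  rw [hc, hf, hg]
  by_cases h : t = j <;> simp [h]
/-- The bracket satisfies the Jacobi identity (and is skew-symmetric), `φ` is a derivation
of it, and `φ` is pre-Einstein: `trace (φ ∘ ψ) = trace ψ` for every derivation `ψ`. -/
theorem stmt (lam : ℝ) :
    Skew (c6 lam) ∧ Jacobi (c6 lam) ∧
    ((1/5 : ℝ) • diagL ![1, 2, 3, 4, 5, 6, 7]) ∈ derivations (c6 lam) ∧
    ∀ ψ ∈ derivations (c6 lam),
      LinearMap.trace ℝ V7 (((1/5 : ℝ) • diagL ![1, 2, 3, 4, 5, 6, 7]) ∘ₗ ψ) = LinearMap.trace ℝ V7 ψ := by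
  have hφ : ∀ (v : V7) (p : Fin 7),
      (((1/5 : ℝ) • diagL ![1, 2, 3, 4, 5, 6, 7]) v) p
        = (1/5) * ((![1, 2, 3, 4, 5, 6, 7] : Fin 7 → ℝ) p * v p) := by
    intro v p
    simp [diagL_apply, LinearMap.smul_apply, Pi.smul_apply, smul_eq_mul]
  refine ⟨?_, ?_, ?_, ?_⟩
  · -- Skew
    intro x y
    funext k
    show br (c6 lam) x y k = - br (c6 lam) y x k
    have hcomm : br (c6 lam) x y k = ∑ j, ∑ i, x i * y j * c6 lam i j k := by
      rw [br_apply]; exact Finset.sum_comm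
    rw [hcomm, eq_neg_iff_add_eq_zero, br_apply, ← Finset.sum_add_distrib]
    refine Finset.sum_eq_zero fun j _ => ?_
    rw [← Finset.sum_add_distrib]
    refine Finset.sum_eq_zero fun i _ => ?_
    linear_combination (x i * y j) * c6_anti lam i j k
  · -- Jacobi
    intro x y z
    funext k
    simp only [Pi.add_apply, Pi.zero_apply]
    rw [quad (c6 lam) x y z k, quad (c6 lam) y z x k, quad (c6 lam) z x y k]
    rw [sum3_cycle (fun a b c' => y a * z b * x c' * (∑ m, c6 lam a b m * c6 lam m c' k))]
    rw [sum3_cycle (fun a b c' => z a * x b * y c' * (∑ m, c6 lam a b m * c6 lam m c' k))]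
    rw [sum3_cycle (fun c' a b => z a * x b * y c' * (∑ m, c6 lam a b m * c6 lam m c' k))]
    rw [← Finset.sum_add_distrib, ← Finset.sum_add_distrib]
    refine Finset.sum_eq_zero fun a _ => ?_
    rw [← Finset.sum_add_distrib, ← Finset.sum_add_distrib]
    refine Finset.sum_eq_zero fun b _ => ?_
    rw [← Finset.sum_add_distrib, ← Finset.sum_add_distrib]
    refine Finset.sum_eq_zero fun c' _ => ?_
    have h := coeff_zero lam a b c' k
    rw [Finset.sum_add_distrib, Finset.sum_add_distrib] at h
    linear_combination (x a * y b * z c') * h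
  · -- derivation
    rw [mem_derivations]
    intro x y
    funext k
    rw [Pi.add_apply]
    simp only [hφ, br_apply]
    have expand : (1/5 : ℝ) * ((![1, 2, 3, 4, 5, 6, 7] : Fin 7 → ℝ) k
          * ∑ i, ∑ j, x i * y j * c6 lam i j k)
        = ∑ i, ∑ j, (1/5 : ℝ) * ((![1, 2, 3, 4, 5, 6, 7] : Fin 7 → ℝ) k
          * (x i * y j * c6 lam i j k)) := by
      rw [Finset.mul_sum, Finset.mul_sum]
      refine Finset.sum_congr rfl fun i _ => ?_
      rw [Finset.mul_sum, Finset.mul_sum]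
    rw [expand, ← Finset.sum_add_distrib]
    refine Finset.sum_congr rfl fun i _ => ?_
    rw [← Finset.sum_add_distrib]
    refine Finset.sum_congr rfl fun j _ => ?_
    linear_combination (1/5 * (x i * y j)) * haval lam i j k
  · -- pre-Einstein
    intro ψ hψ
    rw [mem_derivations] at hψ
    have k1 : ψ (e 5) 5 = ψ (e 0) 0 + ψ (e 4) 4 := by
      refine key (c6 lam) hψ 0 4 5 (c6_eval lam ?_ ?_) (c6_eval2 lam ?_ ?_)
        (c6_eval3 lam ?_ ?_) <;> decide
    have k2 : ψ (e 6) 6 = ψ (e 0) 0 + ψ (e 5) 5 := by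
      refine key (c6 lam) hψ 0 5 6 (c6_eval lam ?_ ?_) (c6_eval2 lam ?_ ?_)
        (c6_eval3 lam ?_ ?_) <;> decide
    have k3 : ψ (e 4) 4 = ψ (e 1) 1 + ψ (e 2) 2 := by
      refine key (c6 lam) hψ 1 2 4 (c6_eval lam ?_ ?_) (c6_eval2 lam ?_ ?_)
        (c6_eval3 lam ?_ ?_) <;> decide
    have k4 : ψ (e 5) 5 = ψ (e 1) 1 + ψ (e 3) 3 := by
      refine key (c6 lam) hψ 1 3 5 (c6_eval lam ?_ ?_) (c6_eval2 lam ?_ ?_)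
        (c6_eval3 lam ?_ ?_) <;> decide
    have htr : LinearMap.trace ℝ V7 (((1/5 : ℝ) • diagL ![1, 2, 3, 4, 5, 6, 7]) ∘ₗ ψ)
        = ∑ p, (1/5 : ℝ) * ((![1, 2, 3, 4, 5, 6, 7] : Fin 7 → ℝ) p * ψ (e p) p) := by
      rw [trace_eq]
      refine Finset.sum_congr rfl fun p _ => ?_
      rw [LinearMap.comp_apply]
      exact hφ (ψ (e p)) p
    rw [htr, trace_eq]
    have a5 : (![1, 2, 3, 4, 5, 6, 7] : Fin 7 → ℝ) 5 = 6 := rfl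
    have a6 : (![1, 2, 3, 4, 5, 6, 7] : Fin 7 → ℝ) 6 = 7 := rfl
    simp only [Fin.sum_univ_seven]
    norm_num [Matrix.cons_val_zero, Matrix.cons_val_one, Matrix.head_cons, a5, a6]
    simp only [show (![1, 2, 3, 4, 5, 6, 7] : Fin 7 → ℝ) 2 = 3 from rfl,
      show (![1, 2, 3, 4, 5, 6, 7] : Fin 7 → ℝ) 3 = 4 from rfl,
      show (![1, 2, 3, 4, 5, 6, 7] : Fin 7 → ℝ) 4 = 5 from rfl]
    linarith [k1, k2, k3, k4]
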